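/- Let f : ℝ → ℝ be C¹ and τ > 0 with |f'(t)| bounded. Define the offset abscissa map x_o(t) = t − τ f'(t)/√(1+f'(t)²). If f is C² and τ·|f''(t)|/(1+f'(t)²)^{3/2} < 1 for all t, then x_o is strictly increasing, hence injective, so the exterior offset of the Cartesian curve (t, f(t)) is itself the graph of a function. -/

import Mathlib

private lemma key_deriv (y : ℝ) :
    HasDerivAt (fun y : ℝ => y / Real.sqrt (1 + y ^ 2))
      (1 / (1 + y ^ 2) ^ ((3 : ℝ) / 2)) y := by
  have hpos : (0 : ℝ) < 1 + y ^ 2 := by positivity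
  have hs : 0 < Real.sqrt (1 + y ^ 2) := Real.sqrt_pos.mpr hpos
  have hinner : HasDerivAt (fun y : ℝ => 1 + y ^ 2) (2 * y) y := by
    simpa using ((hasDerivAt_pow 2 y).const_add 1)
  have hsqrt : HasDerivAt (fun y : ℝ => Real.sqrt (1 + y ^ 2))
      (y / Real.sqrt (1 + y ^ 2)) y := by
    have := (Real.hasDerivAt_sqrt hpos.ne').comp y hinner
    refine this.congr_deriv ?_
    field_simp
  have hdiv := (hasDerivAt_id y).div hsqrt hs.ne'
  have hsq : Real.sqrt (1 + y ^ 2) ^ 2 = 1 + y ^ 2 := Real.sq_sqrt hpos.le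
  have hcube : (1 + y ^ 2) ^ ((3 : ℝ) / 2) = Real.sqrt (1 + y ^ 2) ^ 3 := by
    rw [Real.sqrt_eq_rpow, ← Real.rpow_natCast ((1 + y ^ 2) ^ ((1:ℝ)/2)) 3,
      ← Real.rpow_mul hpos.le]
    norm_num
  refine hdiv.congr_deriv ?_
  rw [hcube]
  rw [div_eq_div_iff (by positivity) (by positivity)]
  field_simp
  simp only [id_eq]
  nlinarith [hsq, hs]

/-- if `f` is C² with bounded derivative, `τ > 0`, and
`τ |f''| / (1 + f'²)^(3/2) < 1` everywhere, then the offset abscissa map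
`x_o(t) = t - τ f'(t)/√(1 + f'(t)²)` is strictly increasing, hence injective
(so the offset of the Cartesian curve is itself the graph of a function). -/
theorem offset_abscissa_strictMono
    (f : ℝ → ℝ) (hf1 : ContDiff ℝ 1 f) (hf2 : ContDiff ℝ 2 f)
    (τ : ℝ) (hτ : 0 < τ)
    (hb : ∃ M : ℝ, ∀ t, |deriv f t| ≤ M)
    (hsmall : ∀ t, τ * |deriv (deriv f) t| / (1 + deriv f t ^ 2) ^ ((3 : ℝ) / 2) < 1) :
    StrictMono (fun t => t - τ * deriv f t / Real.sqrt (1 + deriv f t ^ 2)) ∧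
    Function.Injective
      (fun t => t - τ * deriv f t / Real.sqrt (1 + deriv f t ^ 2)) := by
  set u := deriv f with hu
  have hf2' : ContDiff ℝ ((1:ℕ) + 1 : ℕ∞) f := by norm_num [hf2]
  have hu1 : ContDiff ℝ 1 u := (contDiff_succ_iff_deriv.mp hf2').2.2
  have hud : Differentiable ℝ u := hu1.differentiable one_ne_zero
  have key : ∀ t, HasDerivAt (fun t => t - τ * u t / Real.sqrt (1 + u t ^ 2))
      (1 - τ * (deriv u t / (1 + u t ^ 2) ^ ((3 : ℝ) / 2))) t := by
    intro t
    have h1 : HasDerivAt (fun t => u t / Real.sqrt (1 + u t ^ 2))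
        (1 / (1 + u t ^ 2) ^ ((3 : ℝ) / 2) * deriv u t) t :=
      (key_deriv (u t)).comp t (hud t).hasDerivAt
    have h2 := (hasDerivAt_id t).sub (h1.const_mul τ)
    convert h2 using 2
    · rfl
    · rfl
    · simp [mul_div_assoc]
    · ring
  have hpos : ∀ t, 0 < 1 - τ * (deriv u t / (1 + u t ^ 2) ^ ((3 : ℝ) / 2)) := by
    intro t
    have hP : (0 : ℝ) < (1 + u t ^ 2) ^ ((3 : ℝ) / 2) := by positivity
    have h := hsmall t
    have h2 : τ * (deriv u t / (1 + u t ^ 2) ^ ((3 : ℝ) / 2))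
        ≤ τ * |deriv (deriv f) t| / (1 + u t ^ 2) ^ ((3 : ℝ) / 2) := by
      rw [mul_div_assoc]
      gcongr
      exact le_abs_self _
    linarith
  have hmono : StrictMono (fun t => t - τ * u t / Real.sqrt (1 + u t ^ 2)) := by
    apply strictMono_of_deriv_pos
    intro t
    rw [(key t).deriv]
    exact hpos t
  exact ⟨hmono, hmono.injective⟩
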